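/- State-feedback SLP necessity: suppose [[zI - A, -B],[-K, I]]·[[Φx, S_xu],[Φu, S_uu]] = I over rational transfer matrices, with K proper and Φx, Φu stable proper. Then (zI - A)Φx = I + BΦu, hence Φx is strictly proper (Φx ∈ z⁻¹RH∞), and Φu = K·Φx is also strictly proper. -/

import Mathlib

set_option synthInstance.maxHeartbeats 1000000
set_option maxHeartbeats 1000000

noncomputable section

/-- A rational function is proper if its numerator degree does not exceed its denominator
degree. -/
def RatFunc.Proper (r : RatFunc ℝ) : Prop := r.num.degree ≤ r.denom.degree

/-- A rational function is strictly proper if its numerator degree is strictly smaller than its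
denominator degree. -/
def RatFunc.StrictlyProper (r : RatFunc ℝ) : Prop := r.num.degree < r.denom.degree

/-- A rational function is stable if all (complex) roots of its denominator lie strictly inside
the unit disc. -/
def RatFunc.Stable (r : RatFunc ℝ) : Prop :=
  ∀ w : ℂ, (r.denom.map (algebraMap ℝ ℂ)).IsRoot w → ‖w‖ < 1

namespace RatFunc

lemma proper_iff' {r : RatFunc ℝ} : r.Proper ↔ r.intDegree ≤ 0 := by
  rcases eq_or_ne r 0 with rfl | hr
  · simp [Proper, intDegree_zero]
  · rw [Proper, intDegree, sub_nonpos,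
      Polynomial.degree_eq_natDegree (num_ne_zero hr),
      Polynomial.degree_eq_natDegree r.denom_ne_zero]
    exact_mod_cast Iff.rfl

lemma strictlyProper_iff' {r : RatFunc ℝ} :
    r.StrictlyProper ↔ r = 0 ∨ r.intDegree < 0 := by
  rcases eq_or_ne r 0 with rfl | hr
  · simp [StrictlyProper]
  · rw [StrictlyProper, intDegree, sub_neg,
      Polynomial.degree_eq_natDegree (num_ne_zero hr),
      Polynomial.degree_eq_natDegree r.denom_ne_zero]
    constructor
    · intro h; right; exact_mod_cast h
    · rintro (h | h)
      · exact absurd h hr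
      · exact_mod_cast h

lemma Proper.zero' : (0 : RatFunc ℝ).Proper := proper_iff'.mpr (by simp [intDegree_zero])

lemma StrictlyProper.zero' : (0 : RatFunc ℝ).StrictlyProper := strictlyProper_iff'.mpr (Or.inl rfl)

lemma StrictlyProper.proper {r : RatFunc ℝ} (h : r.StrictlyProper) : r.Proper := by
  rcases strictlyProper_iff'.mp h with rfl | h'
  · exact Proper.zero'
  · exact proper_iff'.mpr h'.le

lemma Proper.add' {r s : RatFunc ℝ} (hr : r.Proper) (hs : s.Proper) : (r + s).Proper := by
  rcases eq_or_ne (r + s) 0 with h0 | h0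
  · rw [h0]; exact Proper.zero'
  rcases eq_or_ne s 0 with rfl | hs0
  · simpa using hr
  rw [proper_iff'] at *
  exact (intDegree_add_le hs0 h0).trans (max_le hr hs)

lemma StrictlyProper.add' {r s : RatFunc ℝ} (hr : r.StrictlyProper) (hs : s.StrictlyProper) :
    (r + s).StrictlyProper := by
  rcases eq_or_ne (r + s) 0 with h0 | h0
  · rw [h0]; exact StrictlyProper.zero'
  rcases eq_or_ne s 0 with rfl | hs0
  · simpa using hr
  rcases strictlyProper_iff'.mp hr with rfl | hr'
  · simpa using hs
  rcases strictlyProper_iff'.mp hs with rfl | hs'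
  · simpa using hr
  exact strictlyProper_iff'.mpr (Or.inr
    ((intDegree_add_le hs0 h0).trans_lt (max_lt hr' hs')))

lemma Proper.mul' {r s : RatFunc ℝ} (hr : r.Proper) (hs : s.Proper) : (r * s).Proper := by
  rcases eq_or_ne r 0 with rfl | hr0
  · simpa using Proper.zero'
  rcases eq_or_ne s 0 with rfl | hs0
  · simpa using Proper.zero'
  rw [proper_iff'] at *
  rw [intDegree_mul hr0 hs0]
  exact add_nonpos hr hs

lemma Proper.mul_strictlyProper {r s : RatFunc ℝ} (hr : r.Proper) (hs : s.StrictlyProper) :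
    (r * s).StrictlyProper := by
  rcases eq_or_ne r 0 with rfl | hr0
  · simpa using StrictlyProper.zero'
  rcases strictlyProper_iff'.mp hs with rfl | hs'
  · simpa using StrictlyProper.zero'
  have hs0 : s ≠ 0 := by rintro rfl; simp [intDegree_zero] at hs'
  refine strictlyProper_iff'.mpr (Or.inr ?_)
  rw [intDegree_mul hr0 hs0]
  have := proper_iff'.mp hr
  omega

lemma strictlyProper_of_X_mul {r : RatFunc ℝ} (h : ((X : RatFunc ℝ) * r).Proper) :
    r.StrictlyProper := by
  rcases eq_or_ne r 0 with rfl | hr0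
  · exact StrictlyProper.zero'
  have hX : (X : RatFunc ℝ) ≠ 0 := by
    intro hx
    have := intDegree_X (K := ℝ)
    rw [hx, intDegree_zero] at this
    norm_num at this
  have := proper_iff'.mp h
  rw [intDegree_mul hX hr0, intDegree_X] at this
  exact strictlyProper_iff'.mpr (Or.inr (by omega))

lemma proper_algebraMap (c : ℝ) : (algebraMap ℝ (RatFunc ℝ) c).Proper := by
  rw [proper_iff', RatFunc.algebraMap_eq_C, intDegree_C]

lemma proper_one : (1 : RatFunc ℝ).Proper := proper_iff'.mpr (by rw [intDegree_one])

lemma proper_sum {ι : Type*} (s : Finset ι) (f : ι → RatFunc ℝ)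
    (hf : ∀ i ∈ s, (f i).Proper) : (∑ i ∈ s, f i).Proper := by
  classical
  induction s using Finset.induction_on with
  | empty => simpa using Proper.zero'
  | insert _ _ hni ih =>
    rw [Finset.sum_insert hni]
    exact Proper.add' (hf _ (Finset.mem_insert_self _ _))
      (ih fun i hi => hf i (Finset.mem_insert_of_mem hi))

lemma strictlyProper_sum {ι : Type*} (s : Finset ι) (f : ι → RatFunc ℝ)
    (hf : ∀ i ∈ s, (f i).StrictlyProper) : (∑ i ∈ s, f i).StrictlyProper := by
  classical
  induction s using Finset.induction_on with
  | empty => simpa using StrictlyProper.zero'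
  | insert _ _ hni ih =>
    rw [Finset.sum_insert hni]
    exact StrictlyProper.add' (hf _ (Finset.mem_insert_self _ _))
      (ih fun i hi => hf i (Finset.mem_insert_of_mem hi))

end RatFunc

/-- State-feedback SLP (necessity): if
`[[zI - A, -B],[-K, I]] * [[Φx, Sxu],[Φu, Suu]] = I` with `K` proper and `Φx, Φu ∈ RH∞`
(stable proper), then `(zI - A) Φx = I + B Φu`, `Φx` is strictly proper (`z⁻¹ RH∞`), and
`Φu = K Φx` is strictly proper as well. -/
theorem state_feedback_slp_necessity {n m : Type*} [Fintype n] [Fintype m]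
    [DecidableEq n] [DecidableEq m]
    (A : Matrix n n ℝ) (B : Matrix n m ℝ)
    (K : Matrix m n (RatFunc ℝ))
    (Φx : Matrix n n (RatFunc ℝ)) (Sxu : Matrix n m (RatFunc ℝ))
    (Φu : Matrix m n (RatFunc ℝ)) (Suu : Matrix m m (RatFunc ℝ))
    (h : Matrix.fromBlocks
          ((RatFunc.X : RatFunc ℝ) • (1 : Matrix n n (RatFunc ℝ))
            - A.map (algebraMap ℝ (RatFunc ℝ)))
          (-(B.map (algebraMap ℝ (RatFunc ℝ)))) (-K) (1 : Matrix m m (RatFunc ℝ))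
          * Matrix.fromBlocks Φx Sxu Φu Suu = 1)
    (hK : ∀ i j, (K i j).Proper)
    (hΦx : ∀ i j, (Φx i j).Proper ∧ (Φx i j).Stable)
    (hΦu : ∀ i j, (Φu i j).Proper ∧ (Φu i j).Stable) :
    ((RatFunc.X : RatFunc ℝ) • (1 : Matrix n n (RatFunc ℝ))
        - A.map (algebraMap ℝ (RatFunc ℝ))) * Φx
      = 1 + (B.map (algebraMap ℝ (RatFunc ℝ))) * Φu ∧
    (∀ i j, (Φx i j).StrictlyProper) ∧
    Φu = K * Φx ∧
    (∀ i j, (Φu i j).StrictlyProper) := by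
  rw [Matrix.fromBlocks_multiply, ← Matrix.fromBlocks_one, Matrix.fromBlocks_inj] at h
  obtain ⟨h11, -, h21, -⟩ := h
  have conc1 : ((RatFunc.X : RatFunc ℝ) • (1 : Matrix n n (RatFunc ℝ))
        - A.map (algebraMap ℝ (RatFunc ℝ))) * Φx
      = 1 + (B.map (algebraMap ℝ (RatFunc ℝ))) * Φu := by
    rw [Matrix.neg_mul, ← sub_eq_add_neg, sub_eq_iff_eq_add', add_comm] at h11
    exact h11
  have conc3 : Φu = K * Φx := by
    rw [Matrix.neg_mul, Matrix.one_mul, neg_add_eq_sub, sub_eq_zero] at h21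
    exact h21
  have hX : (RatFunc.X : RatFunc ℝ) • Φx
      = (1 + (B.map (algebraMap ℝ (RatFunc ℝ))) * Φu)
        + (A.map (algebraMap ℝ (RatFunc ℝ))) * Φx := by
    have h' := conc1
    rw [Matrix.sub_mul, Matrix.smul_mul, Matrix.one_mul, sub_eq_iff_eq_add] at h'
    exact h'
  have h2 : ∀ i j, (Φx i j).StrictlyProper := by
    intro i j
    apply RatFunc.strictlyProper_of_X_mul
    have he := congrFun (congrFun hX i) j
    rw [Matrix.smul_apply, smul_eq_mul] at he
    rw [he, Matrix.add_apply, Matrix.add_apply]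
    refine RatFunc.Proper.add' (RatFunc.Proper.add' ?_ ?_) ?_
    · by_cases hij : i = j <;>
        simp [Matrix.one_apply, hij, RatFunc.proper_one, RatFunc.Proper.zero']
    · rw [Matrix.mul_apply]
      exact RatFunc.proper_sum _ _ fun k _ => by
        rw [Matrix.map_apply]
        exact RatFunc.Proper.mul' (RatFunc.proper_algebraMap _) (hΦu k j).1
    · rw [Matrix.mul_apply]
      exact RatFunc.proper_sum _ _ fun k _ => by
        rw [Matrix.map_apply]
        exact RatFunc.Proper.mul' (RatFunc.proper_algebraMap _) (hΦx k j).1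
  have h4 : ∀ i j, (Φu i j).StrictlyProper := by
    intro i j
    rw [conc3, Matrix.mul_apply]
    exact RatFunc.strictlyProper_sum _ _ fun k _ =>
      RatFunc.Proper.mul_strictlyProper (hK i k) (h2 k j)
  exact ⟨conc1, h2, conc3, h4⟩
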